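/- (Short-expiry limit under the vanishing-at-origin condition.) Fix k ∈ ℝ and let v : (0,∞) → (0,∞) satisfy v(τ)·√τ → 0 as τ → 0⁺. Then BS(τ, k, v(τ)) → max(1 − e^k, 0) as τ → 0⁺. -/

import Mathlib

open Real Filter Set MeasureTheory

/-- Standard normal probability density function. -/
noncomputable def stdGaussPDF (x : ℝ) : ℝ :=
  (Real.sqrt (2 * Real.pi))⁻¹ * Real.exp (-(x ^ 2) / 2)

/-- Standard normal cumulative distribution function. -/
noncomputable def stdGaussCDF (x : ℝ) : ℝ :=
  ∫ t in Set.Iic x, stdGaussPDF t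

/-- d1 term of the Black–Scholes formula. -/
noncomputable def d1 (τ k v : ℝ) : ℝ :=
  -k / (v * Real.sqrt τ) + v * Real.sqrt τ / 2

/-- d2 term of the Black–Scholes formula. -/
noncomputable def d2 (τ k v : ℝ) : ℝ :=
  -k / (v * Real.sqrt τ) - v * Real.sqrt τ / 2

/-- Black–Scholes call price in units of the forward. -/
noncomputable def BS (τ k v : ℝ) : ℝ :=
  stdGaussCDF (d1 τ k v) - Real.exp k * stdGaussCDF (d2 τ k v)

/-- The butterfly functional. -/
noncomputable def But (τ k v₀ v₁ v₂ : ℝ) : ℝ :=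
  (1 + d1 τ k v₀ * v₁ * Real.sqrt τ) * (1 + d2 τ k v₀ * v₁ * Real.sqrt τ) + v₀ * v₂ * τ

lemma stdGaussPDF_eq : stdGaussPDF = ProbabilityTheory.gaussianPDFReal 0 1 := by
  funext x
  simp [stdGaussPDF, ProbabilityTheory.gaussianPDFReal]

lemma integrable_stdGaussPDF : Integrable stdGaussPDF := by
  rw [stdGaussPDF_eq]; exact ProbabilityTheory.integrable_gaussianPDFReal 0 1

lemma integral_stdGaussPDF : ∫ x, stdGaussPDF x = 1 := by
  rw [stdGaussPDF_eq]; exact ProbabilityTheory.integral_gaussianPDFReal_eq_one 0 one_ne_zero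

lemma stdGaussPDF_nonneg (x : ℝ) : 0 ≤ stdGaussPDF x := by
  unfold stdGaussPDF; positivity

lemma stdGaussPDF_le (x : ℝ) : stdGaussPDF x ≤ (Real.sqrt (2 * Real.pi))⁻¹ := by
  unfold stdGaussPDF
  have h1 : Real.exp (-(x ^ 2) / 2) ≤ 1 := by
    rw [Real.exp_le_one_iff]; nlinarith [sq_nonneg x]
  have h2 : (0:ℝ) ≤ (Real.sqrt (2 * Real.pi))⁻¹ := by positivity
  nlinarith

lemma stdGaussCDF_tendsto_atTop : Tendsto stdGaussCDF atTop (nhds 1) := by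
  have h := tendsto_setIntegral_of_monotone (f := stdGaussPDF) (μ := volume)
    (s := fun x : ℝ => Iic x) (fun i => measurableSet_Iic)
    (fun a b hab => Iic_subset_Iic.2 hab)
    (by rw [iUnion_Iic]; exact integrable_stdGaussPDF.integrableOn)
  rw [iUnion_Iic] at h
  show Tendsto (fun x => ∫ t in Set.Iic x, stdGaussPDF t) atTop (nhds 1)
  simpa [stdGaussCDF, Measure.restrict_univ, integral_stdGaussPDF] using h

lemma stdGaussCDF_tendsto_atBot : Tendsto stdGaussCDF atBot (nhds 0) := by
  have h := tendsto_setIntegral_of_antitone (f := stdGaussPDF) (μ := volume)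
    (s := fun x : ℝ => Iic (-x)) (fun i => measurableSet_Iic)
    (fun a b hab => Iic_subset_Iic.2 (neg_le_neg hab))
    ⟨0, integrable_stdGaussPDF.integrableOn⟩
  have he : (⋂ x : ℝ, Iic (-x)) = ∅ := by
    ext y; simp only [mem_iInter, mem_Iic, mem_empty_iff_false, iff_false]
    push_neg
    exact ⟨-(y - 1), by linarith⟩
  rw [he] at h
  simp only [Measure.restrict_empty, integral_zero_measure] at h
  have h2 : Tendsto (fun x : ℝ => stdGaussCDF (-x)) atTop (nhds 0) := h
  have h3 := h2.comp tendsto_neg_atBot_atTop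
  simpa [Function.comp_def] using h3

lemma continuous_stdGaussCDF : Continuous stdGaussCDF := by
  have key : ∀ a b : ℝ, dist (stdGaussCDF a) (stdGaussCDF b)
      ≤ (Real.sqrt (2 * Real.pi))⁻¹ * dist a b := by
    intro a b
    rw [Real.dist_eq, Real.dist_eq]
    have heq : stdGaussCDF a - stdGaussCDF b = ∫ x in b..a, stdGaussPDF x :=
      intervalIntegral.integral_Iic_sub_Iic integrable_stdGaussPDF.integrableOn
        integrable_stdGaussPDF.integrableOn
    rw [heq]
    have := intervalIntegral.norm_integral_le_of_norm_le_const
      (C := (Real.sqrt (2 * Real.pi))⁻¹) (a := b) (b := a) (f := stdGaussPDF)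
      (fun x _ => by
        rw [Real.norm_eq_abs, abs_of_nonneg (stdGaussPDF_nonneg x)]
        exact stdGaussPDF_le x)
    simpa [Real.norm_eq_abs, abs_sub_comm a b] using this
  exact (LipschitzWith.of_dist_le_mul (K := ⟨(Real.sqrt (2 * Real.pi))⁻¹, by positivity⟩)
    (by exact key)).continuous

theorem stmt18 (k : ℝ) (v : ℝ → ℝ) (hv : ∀ τ, 0 < τ → 0 < v τ)
    (hvanish : Filter.Tendsto (fun τ => v τ * Real.sqrt τ)
      (nhdsWithin 0 (Set.Ioi 0)) (nhds 0)) :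
    Filter.Tendsto (fun τ => BS τ k (v τ)) (nhdsWithin 0 (Set.Ioi 0))
      (nhds (max (1 - Real.exp k) 0)) := by
  set l := nhdsWithin (0:ℝ) (Set.Ioi 0) with hl
  have hs : Tendsto (fun τ => v τ * Real.sqrt τ) l (nhdsWithin 0 (Set.Ioi 0)) := by
    apply tendsto_nhdsWithin_of_tendsto_nhds_of_eventually_within _ hvanish
    filter_upwards [self_mem_nhdsWithin] with τ hτ
    exact mul_pos (hv τ hτ) (Real.sqrt_pos.2 hτ)
  have hhalf : Tendsto (fun τ => v τ * Real.sqrt τ / 2) l (nhds 0) := by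
    simpa using hvanish.div_const 2
  rcases lt_trichotomy k 0 with hk | hk | hk
  · -- k < 0
    have hinv : Tendsto (fun τ => -k / (v τ * Real.sqrt τ)) l atTop := by
      have h1 : Tendsto (fun s : ℝ => -k * s⁻¹) (nhdsWithin 0 (Set.Ioi 0)) atTop :=
        tendsto_inv_nhdsGT_zero.const_mul_atTop (by linarith)
      exact Tendsto.congr (fun τ => by simp only [Function.comp_apply, div_eq_mul_inv]) (h1.comp hs)
    have hd1 : Tendsto (fun τ => d1 τ k (v τ)) l atTop := by
      unfold d1; exact hinv.atTop_add hhalf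
    have hd2 : Tendsto (fun τ => d2 τ k (v τ)) l atTop := by
      unfold d2
      simp only [sub_eq_add_neg]
      exact hinv.atTop_add hhalf.neg
    have hmax : max (1 - Real.exp k) 0 = 1 - Real.exp k :=
      max_eq_left (by nlinarith [Real.exp_lt_one_iff.2 hk])
    rw [hmax]
    have hc1 := stdGaussCDF_tendsto_atTop.comp hd1
    have hc2 := stdGaussCDF_tendsto_atTop.comp hd2
    have := hc1.sub (hc2.const_mul (Real.exp k))
    simpa [BS, Function.comp_def, mul_one] using this
  · -- k = 0
    subst hk
    have hd1 : Tendsto (fun τ => d1 τ 0 (v τ)) l (nhds 0) := by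
      have : (fun τ => d1 τ 0 (v τ)) = fun τ => v τ * Real.sqrt τ / 2 := by
        funext τ; simp [d1]
      rw [this]; exact hhalf
    have hd2 : Tendsto (fun τ => d2 τ 0 (v τ)) l (nhds 0) := by
      have : (fun τ => d2 τ 0 (v τ)) = fun τ => -(v τ * Real.sqrt τ / 2) := by
        funext τ; simp [d2]
      rw [this]; simpa using hhalf.neg
    have hc1 := (continuous_stdGaussCDF.tendsto 0).comp hd1
    have hc2 := (continuous_stdGaussCDF.tendsto 0).comp hd2
    have := hc1.sub (hc2.const_mul (Real.exp 0))
    simpa [BS, Function.comp_def] using this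
  · -- k > 0
    have hinv : Tendsto (fun τ => -k / (v τ * Real.sqrt τ)) l atBot := by
      have h1 : Tendsto (fun s : ℝ => -k * s⁻¹) (nhdsWithin 0 (Set.Ioi 0)) atBot :=
        tendsto_inv_nhdsGT_zero.const_mul_atTop_of_neg (by linarith)
      exact Tendsto.congr (fun τ => by simp only [Function.comp_apply, div_eq_mul_inv]) (h1.comp hs)
    have hd1 : Tendsto (fun τ => d1 τ k (v τ)) l atBot := by
      unfold d1; exact hinv.atBot_add hhalf
    have hd2 : Tendsto (fun τ => d2 τ k (v τ)) l atBot := by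
      unfold d2
      simp only [sub_eq_add_neg]
      exact hinv.atBot_add hhalf.neg
    have hmax : max (1 - Real.exp k) 0 = 0 :=
      max_eq_right (by nlinarith [Real.one_lt_exp_iff.2 hk])
    rw [hmax]
    have hc1 := stdGaussCDF_tendsto_atBot.comp hd1
    have hc2 := stdGaussCDF_tendsto_atBot.comp hd2
    have := hc1.sub (hc2.const_mul (Real.exp k))
    simpa [BS, Function.comp_def] using this
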